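/- Under the hypotheses of the higher-level suboptimality bound — namely (i) |J(π*) − J(π_θ)| ≤ (2 R_max / ((1−γ)(1−γ^c))) · E_{s∼d, g∼ν}[D_TV(π*(·|s,g), π_θ(·|s,g))], (ii) d ≪ κ with κ-essentially bounded density C, (iii) π* is φ-common in Π, and (iv) the relevant total-variation maps are measurable — one has, with λ_H = (2 R_max / ((1−γ)(1−γ^c))) · C, the minorization J(π*) ≥ J(π_θ) − λ_H · φ − λ_H · E_{s∼κ, i∼Π, g∼ν}[D_TV(π_{D,i}(·|s,g), π_θ(·|s,g))]. -/

import Mathlib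

open MeasureTheory

/-- Total variation distance between two measures:
`D_TV(P,Q) = sup over measurable sets A of `|P(A) − Q(A)|`. -/
noncomputable def tvDist {T : Type*} [MeasurableSpace T] (P Q : Measure T) : ℝ :=
  ⨆ A : {A : Set T // MeasurableSet A}, |(P A.1).toReal - (Q A.1).toReal|

lemma tv_term_le_one {T : Type*} [MeasurableSpace T] (P Q : Measure T)
    [IsProbabilityMeasure P] [IsProbabilityMeasure Q] (A : {A : Set T // MeasurableSet A}) :
    |(P A.1).toReal - (Q A.1).toReal| ≤ 1 := by
  have h1 : (P A.1).toReal ≤ 1 := by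
    simpa using ENNReal.toReal_mono (by simp) (prob_le_one (μ := P) (s := A.1))
  have h2 : (Q A.1).toReal ≤ 1 := by
    simpa using ENNReal.toReal_mono (by simp) (prob_le_one (μ := Q) (s := A.1))
  have h3 : 0 ≤ (P A.1).toReal := ENNReal.toReal_nonneg
  have h4 : 0 ≤ (Q A.1).toReal := ENNReal.toReal_nonneg
  rw [abs_sub_le_iff]; constructor <;> linarith

lemma tv_bdd {T : Type*} [MeasurableSpace T] (P Q : Measure T)
    [IsProbabilityMeasure P] [IsProbabilityMeasure Q] :
    BddAbove (Set.range fun A : {A : Set T // MeasurableSet A} =>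
      |(P A.1).toReal - (Q A.1).toReal|) :=
  ⟨1, by rintro x ⟨A, rfl⟩; exact tv_term_le_one P Q A⟩

lemma tv_nonneg {T : Type*} [MeasurableSpace T] (P Q : Measure T)
    [IsProbabilityMeasure P] [IsProbabilityMeasure Q] : 0 ≤ tvDist P Q := by
  have := le_ciSup (tv_bdd P Q) ⟨∅, MeasurableSet.empty⟩
  simp at this; exact this

lemma tv_le_one {T : Type*} [MeasurableSpace T] (P Q : Measure T)
    [IsProbabilityMeasure P] [IsProbabilityMeasure Q] : tvDist P Q ≤ 1 :=
  ciSup_le fun A => tv_term_le_one P Q A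

lemma tv_triangle {T : Type*} [MeasurableSpace T] (P Q R : Measure T)
    [IsProbabilityMeasure P] [IsProbabilityMeasure Q] [IsProbabilityMeasure R] :
    tvDist P R ≤ tvDist P Q + tvDist Q R := by
  refine ciSup_le fun A => ?_
  have h1 := le_ciSup (tv_bdd P Q) A
  have h2 := le_ciSup (tv_bdd Q R) A
  calc |(P A.1).toReal - (R A.1).toReal|
      ≤ |(P A.1).toReal - (Q A.1).toReal| + |(Q A.1).toReal - (R A.1).toReal| :=
        abs_sub_le _ _ _
    _ ≤ tvDist P Q + tvDist Q R := add_le_add h1 h2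

/-- Minorization: under the hypotheses of the higher-level suboptimality bound,
`J(π*) ≥ J(π_θ) − λ_H·φ − λ_H·E_{s∼κ, i∼Π, g∼ν}[D_TV(π_{D,i}(·|s,g), π_θ(·|s,g))]`
with `λ_H = (2 R_max / ((1−γ)(1−γ^c))) · C`. -/
theorem higher_level_minorization
    {S T G I : Type*} [MeasurableSpace S] [MeasurableSpace T] [MeasurableSpace G]
    [MeasurableSpace I]
    (κ d : Measure S) (ν : Measure G) (μI : Measure I)
    [IsProbabilityMeasure κ] [IsProbabilityMeasure d] [IsProbabilityMeasure ν]
    [IsProbabilityMeasure μI]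
    (πD : I → S → G → Measure T) (πStar πθ : S → G → Measure T)
    (hπD : ∀ i s g, IsProbabilityMeasure (πD i s g))
    (hπStar : ∀ s g, IsProbabilityMeasure (πStar s g))
    (hπθ : ∀ s g, IsProbabilityMeasure (πθ s g))
    (J : (S → G → Measure T) → ℝ)
    (Rmax γ φ C : ℝ) (c : ℕ)
    (hR : 0 ≤ Rmax) (hγ0 : 0 < γ) (hγ1 : γ < 1) (hc : 1 ≤ c)
    (hφ : 0 ≤ φ) (hC : 0 ≤ C)
    -- (i) performance-difference bound
    (hperf : |J πStar - J πθ| ≤ (2 * Rmax / ((1 - γ) * (1 - γ ^ c))) *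
      ∫ p : S × G, tvDist (πStar p.1 p.2) (πθ p.1 p.2) ∂(d.prod ν))
    -- (ii) absolute continuity of `d` w.r.t. `κ` with κ-essentially bounded density
    (hac : d ≪ κ)
    (hbound : ∀ᵐ s ∂κ, d.rnDeriv κ s ≤ ENNReal.ofReal C)
    -- (iii) `π*` is `φ`-common in `Π`
    (hcommon : ∫ p : S × I × G,
        tvDist (πStar p.1 p.2.2) (πD p.2.1 p.1 p.2.2) ∂(κ.prod (μI.prod ν)) ≤ φ)
    -- (iv) measurability of the total-variation maps
    (hm1 : Measurable fun p : S × G => tvDist (πStar p.1 p.2) (πθ p.1 p.2))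
    (hm2 : Measurable fun p : S × I × G => tvDist (πStar p.1 p.2.2) (πD p.2.1 p.1 p.2.2))
    (hm3 : Measurable fun p : S × I × G => tvDist (πD p.2.1 p.1 p.2.2) (πθ p.1 p.2.2)) :
    J πStar ≥ J πθ - (2 * Rmax / ((1 - γ) * (1 - γ ^ c))) * C * φ -
      (2 * Rmax / ((1 - γ) * (1 - γ ^ c))) * C *
        ∫ p : S × I × G,
          tvDist (πD p.2.1 p.1 p.2.2) (πθ p.1 p.2.2) ∂(κ.prod (μI.prod ν)) := by
  set L := 2 * Rmax / ((1 - γ) * (1 - γ ^ c)) with hLdef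
  have hden : 0 < (1 - γ) * (1 - γ ^ c) := by
    have : γ ^ c < 1 := pow_lt_one₀ hγ0.le hγ1 (by omega)
    nlinarith
  have hL : 0 ≤ L := div_nonneg (by linarith) hden.le
  -- names for the three tv functions
  set f : S × G → ℝ := fun p => tvDist (πStar p.1 p.2) (πθ p.1 p.2) with hfdef
  set h1 : S × I × G → ℝ := fun p => tvDist (πStar p.1 p.2.2) (πD p.2.1 p.1 p.2.2) with h1def
  set h2 : S × I × G → ℝ := fun p => tvDist (πD p.2.1 p.1 p.2.2) (πθ p.1 p.2.2) with h2def
  have hfnn : ∀ p, 0 ≤ f p := fun p => by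
    haveI := hπStar p.1 p.2; haveI := hπθ p.1 p.2; exact tv_nonneg _ _
  have hfle1 : ∀ p, f p ≤ 1 := fun p => by
    haveI := hπStar p.1 p.2; haveI := hπθ p.1 p.2; exact tv_le_one _ _
  have h1nn : ∀ p, 0 ≤ h1 p := fun p => by
    haveI := hπStar p.1 p.2.2; haveI := hπD p.2.1 p.1 p.2.2; exact tv_nonneg _ _
  have h1le1 : ∀ p, h1 p ≤ 1 := fun p => by
    haveI := hπStar p.1 p.2.2; haveI := hπD p.2.1 p.1 p.2.2; exact tv_le_one _ _
  have h2nn : ∀ p, 0 ≤ h2 p := fun p => by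
    haveI := hπD p.2.1 p.1 p.2.2; haveI := hπθ p.1 p.2.2; exact tv_nonneg _ _
  have h2le1 : ∀ p, h2 p ≤ 1 := fun p => by
    haveI := hπD p.2.1 p.1 p.2.2; haveI := hπθ p.1 p.2.2; exact tv_le_one _ _
  have htri : ∀ p : S × I × G, f (p.1, p.2.2) ≤ h1 p + h2 p := fun p => by
    haveI := hπStar p.1 p.2.2; haveI := hπθ p.1 p.2.2; haveI := hπD p.2.1 p.1 p.2.2
    exact tv_triangle _ _ _
  -- integrability
  have hfi : Integrable f (d.prod ν) := by
    refine (integrable_const (1 : ℝ)).mono' hm1.aestronglyMeasurable (ae_of_all _ fun p => ?_)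
    rw [Real.norm_eq_abs, abs_of_nonneg (hfnn p)]; exact hfle1 p
  have h1i : Integrable h1 (κ.prod (μI.prod ν)) := by
    refine (integrable_const (1 : ℝ)).mono' hm2.aestronglyMeasurable (ae_of_all _ fun p => ?_)
    rw [Real.norm_eq_abs, abs_of_nonneg (h1nn p)]; exact h1le1 p
  have h2i : Integrable h2 (κ.prod (μI.prod ν)) := by
    refine (integrable_const (1 : ℝ)).mono' hm3.aestronglyMeasurable (ae_of_all _ fun p => ?_)
    rw [Real.norm_eq_abs, abs_of_nonneg (h2nn p)]; exact h2le1 p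
  set ψ : ℝ := ∫ p : S × I × G, h2 p ∂(κ.prod (μI.prod ν)) with hψdef
  have hψnn : 0 ≤ ψ := integral_nonneg h2nn
  -- ENNReal-valued versions
  set F : S × G → ENNReal := fun p => ENNReal.ofReal (f p) with hFdef
  set H1 : S × I × G → ENNReal := fun p => ENNReal.ofReal (h1 p) with hH1def
  set H2 : S × I × G → ENNReal := fun p => ENNReal.ofReal (h2 p) with hH2def
  have hF : Measurable F := ENNReal.measurable_ofReal.comp hm1
  have hH1 : Measurable H1 := ENNReal.measurable_ofReal.comp hm2
  have hH2 : Measurable H2 := ENNReal.measurable_ofReal.comp hm3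
  set G0 : S → ENNReal := fun s => ∫⁻ g, F (s, g) ∂ν with hG0def
  have hG0 : Measurable G0 := hF.lintegral_prod_right'
  -- Step 1: Fubini on d.prod ν
  have step1 : ∫⁻ p, F p ∂(d.prod ν) = ∫⁻ s, G0 s ∂d :=
    lintegral_prod F hF.aemeasurable
  -- Step 2: change of measure via Radon–Nikodym
  have step2 : ∫⁻ s, G0 s ∂d = ∫⁻ s, d.rnDeriv κ s * G0 s ∂κ :=
    (lintegral_rnDeriv_mul hac hG0.aemeasurable).symm
  -- Step 3: bound the density
  have step3 : ∫⁻ s, d.rnDeriv κ s * G0 s ∂κ ≤ ∫⁻ s, ENNReal.ofReal C * G0 s ∂κ :=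
    lintegral_mono_ae (hbound.mono fun s hs => mul_le_mul_left hs _)
  have step4 : ∫⁻ s, ENNReal.ofReal C * G0 s ∂κ = ENNReal.ofReal C * ∫⁻ s, G0 s ∂κ :=
    lintegral_const_mul _ hG0
  -- Step 5: reindex the κ-integral over the larger product space
  have hF' : Measurable fun p : S × I × G => F (p.1, p.2.2) :=
    hF.comp (measurable_fst.prodMk (measurable_snd.comp measurable_snd))
  have step5 : ∫⁻ s, G0 s ∂κ = ∫⁻ p : S × I × G, F (p.1, p.2.2) ∂(κ.prod (μI.prod ν)) := by
    rw [lintegral_prod _ hF'.aemeasurable]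
    refine lintegral_congr fun s => ?_
    have hmsF : Measurable fun q : I × G => F (s, q.2) :=
      hF.comp (measurable_const.prodMk measurable_snd)
    rw [lintegral_prod _ hmsF.aemeasurable]
    simp [hG0def, lintegral_const]
  -- Step 6: triangle inequality pointwise
  have hpt : ∀ p : S × I × G, F (p.1, p.2.2) ≤ H1 p + H2 p := fun p => by
    calc ENNReal.ofReal (f (p.1, p.2.2)) ≤ ENNReal.ofReal (h1 p + h2 p) :=
          ENNReal.ofReal_le_ofReal (htri p)
      _ = H1 p + H2 p := ENNReal.ofReal_add (h1nn p) (h2nn p)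
  have step6 : ∫⁻ p : S × I × G, F (p.1, p.2.2) ∂(κ.prod (μI.prod ν)) ≤
      (∫⁻ p, H1 p ∂(κ.prod (μI.prod ν))) + ∫⁻ p, H2 p ∂(κ.prod (μI.prod ν)) := by
    calc ∫⁻ p : S × I × G, F (p.1, p.2.2) ∂(κ.prod (μI.prod ν))
        ≤ ∫⁻ p, H1 p + H2 p ∂(κ.prod (μI.prod ν)) := lintegral_mono hpt
      _ = _ := lintegral_add_left hH1 _
  -- Step 7: translate the two lintegrals back to real integrals
  have step7a : ∫⁻ p, H1 p ∂(κ.prod (μI.prod ν)) ≤ ENNReal.ofReal φ := by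
    rw [hH1def, ← ofReal_integral_eq_lintegral_ofReal h1i (ae_of_all _ h1nn)]
    exact ENNReal.ofReal_le_ofReal hcommon
  have step7b : ∫⁻ p, H2 p ∂(κ.prod (μI.prod ν)) = ENNReal.ofReal ψ := by
    rw [hH2def, ← ofReal_integral_eq_lintegral_ofReal h2i (ae_of_all _ h2nn)]
  -- assemble the key bound
  have key : ∫⁻ p, F p ∂(d.prod ν) ≤ ENNReal.ofReal (C * (φ + ψ)) := by
    calc ∫⁻ p, F p ∂(d.prod ν) = ∫⁻ s, G0 s ∂d := step1
      _ = ∫⁻ s, d.rnDeriv κ s * G0 s ∂κ := step2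
      _ ≤ ∫⁻ s, ENNReal.ofReal C * G0 s ∂κ := step3
      _ = ENNReal.ofReal C * ∫⁻ s, G0 s ∂κ := step4
      _ = ENNReal.ofReal C * ∫⁻ p : S × I × G, F (p.1, p.2.2) ∂(κ.prod (μI.prod ν)) := by
          rw [step5]
      _ ≤ ENNReal.ofReal C * (ENNReal.ofReal φ + ENNReal.ofReal ψ) := by
          exact mul_le_mul_right (step6.trans (add_le_add step7a step7b.le)) _
      _ = ENNReal.ofReal (C * (φ + ψ)) := by
          rw [← ENNReal.ofReal_add hφ hψnn, ← ENNReal.ofReal_mul hC]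
  have hreal : ∫ p, f p ∂(d.prod ν) ≤ C * (φ + ψ) := by
    have heq : ENNReal.ofReal (∫ p, f p ∂(d.prod ν)) = ∫⁻ p, F p ∂(d.prod ν) :=
      ofReal_integral_eq_lintegral_ofReal hfi (ae_of_all _ hfnn)
    have h' : ENNReal.ofReal (∫ p, f p ∂(d.prod ν)) ≤ ENNReal.ofReal (C * (φ + ψ)) :=
      heq ▸ key
    exact (ENNReal.ofReal_le_ofReal_iff (by positivity)).mp h'
  have h0 : J πθ - J πStar ≤ L * ∫ p, f p ∂(d.prod ν) :=
    (le_abs_self _).trans (by rw [abs_sub_comm]; exact hperf)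
  have h1' : L * ∫ p, f p ∂(d.prod ν) ≤ L * (C * (φ + ψ)) :=
    mul_le_mul_of_nonneg_left hreal hL
  have hexp : L * (C * (φ + ψ)) = L * C * φ + L * C * ψ := by ring
  linarith
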